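/- arXiv:1912.00213 — 2 statements merged into one kernel-verified Lean document; each statement's English description precedes it below -/
import Mathlib

section
/- Let P be a partition of the finite set {1,...,k} and let G(P) be the set of simple graphs on vertex set {1,...,k} whose connected components induce exactly the partition P. Then the sum over G in G(P) of (-1)^{|E(G)|} equals the product over the blocks B of P of (-1)^{|B|-1}·(|B|-1)!. -/
open Finset
open scoped Classical
set_option linter.unusedSectionVars false
set_option maxHeartbeats 1000000

namespace SignedGraphSum

variable {V : Type*} [Fintype V] [DecidableEq V]

/-- Restriction of a graph to a finset of vertices. -/
def restrict (G : SimpleGraph V) (S : Finset V) : SimpleGraph V where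
  Adj i j := G.Adj i j ∧ i ∈ S ∧ j ∈ S
  symm := ⟨by rintro i j ⟨h, hi, hj⟩; exact ⟨h.symm, hj, hi⟩⟩
  loopless := ⟨by rintro i ⟨h, _⟩; exact G.loopless.irrefl i h⟩

@[simp] lemma restrict_adj (G : SimpleGraph V) (S : Finset V) (i j : V) :
    (restrict G S).Adj i j ↔ G.Adj i j ∧ i ∈ S ∧ j ∈ S := Iff.rfl

lemma restrict_le (G : SimpleGraph V) (S : Finset V) : restrict G S ≤ G :=
  fun _ _ h => h.1

/-- `G` has all its edges inside `S`. -/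
def SuppIn (G : SimpleGraph V) (S : Finset V) : Prop :=
  ∀ i j, G.Adj i j → i ∈ S ∧ j ∈ S

/-- `G` has all its edges inside `S` and is connected on `S`. -/
def ConnOn (G : SimpleGraph V) (S : Finset V) : Prop :=
  SuppIn G S ∧ ∀ i ∈ S, ∀ j ∈ S, G.Reachable i j

noncomputable def A (S : Finset V) : Finset (SimpleGraph V) :=
  univ.filter (SuppIn · S)

noncomputable def C (S : Finset V) : Finset (SimpleGraph V) :=
  univ.filter (ConnOn · S)

lemma mem_A {G : SimpleGraph V} {S : Finset V} : G ∈ A S ↔ SuppIn G S := by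
  simp [A]

lemma mem_C {G : SimpleGraph V} {S : Finset V} : G ∈ C S ↔ ConnOn G S := by
  simp [C]

noncomputable def a (S : Finset V) : ℤ := ∑ G ∈ A S, (-1) ^ G.edgeFinset.card
noncomputable def c (S : Finset V) : ℤ := ∑ G ∈ C S, (-1) ^ G.edgeFinset.card

/-- If `T` is closed under adjacency, reachability from a vertex of `T` stays in `T`,
and moreover the restricted graph retains reachability. -/
lemma reach_restrict' {G : SimpleGraph V} {T : Finset V}
    (hT : ∀ a b, G.Adj a b → a ∈ T → b ∈ T) :
    ∀ {i j}, G.Walk i j → i ∈ T → (restrict G T).Reachable i j ∧ j ∈ T := by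
  intro i j w
  induction w with
  | nil => exact fun hi => ⟨SimpleGraph.Reachable.refl _, hi⟩
  | cons h w ih =>
    intro hi
    have hb := hT _ _ h hi
    obtain ⟨hr, hj⟩ := ih hb
    exact ⟨(SimpleGraph.Adj.reachable (show (restrict G T).Adj _ _ from ⟨h, hi, hb⟩)).trans hr, hj⟩

lemma reach_restrict {G : SimpleGraph V} {T : Finset V}
    (hT : ∀ a b, G.Adj a b → a ∈ T → b ∈ T) {i j}
    (hi : i ∈ T) (h : G.Reachable i j) : (restrict G T).Reachable i j := by
  obtain ⟨w⟩ := h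
  exact (reach_restrict' hT w hi).1

lemma mem_of_reachable {G : SimpleGraph V} {T : Finset V}
    (hT : ∀ a b, G.Adj a b → a ∈ T → b ∈ T) {i j}
    (hi : i ∈ T) (h : G.Reachable i j) : j ∈ T := by
  obtain ⟨w⟩ := h
  exact (reach_restrict' hT w hi).2

/-- Disjoint supports give additive edge counts for `⊔`. -/
lemma card_edge_sup {G₁ G₂ : SimpleGraph V} {S T : Finset V}
    (h1 : SuppIn G₁ S) (h2 : SuppIn G₂ T) (hST : Disjoint S T) :
    (G₁ ⊔ G₂).edgeFinset.card = G₁.edgeFinset.card + G₂.edgeFinset.card := by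
  rw [SimpleGraph.edgeFinset_sup, card_union_of_disjoint]
  rw [Finset.disjoint_left]
  intro e he1 he2
  induction e with
  | h i j =>
    rw [SimpleGraph.mem_edgeFinset, SimpleGraph.mem_edgeSet] at he1 he2
    exact hST.forall_ne_finset (h1 _ _ he1).1 (h2 _ _ he2).1 rfl

lemma A_eq_singleton_of_card_le_one {S : Finset V} (hS : S.card ≤ 1) :
    A S = {⊥} := by
  ext G
  simp only [mem_A, Finset.mem_singleton]
  constructor
  · intro h
    ext i j
    simp only [SimpleGraph.bot_adj, iff_false]
    intro hij
    obtain ⟨hi, hj⟩ := h i j hij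
    exact G.ne_of_adj hij (Finset.card_le_one.mp hS i hi j hj)
  · rintro rfl i j hij
    exact absurd hij (by simp)

lemma a_of_card_le_one {S : Finset V} (hS : S.card ≤ 1) : a S = 1 := by
  rw [a, A_eq_singleton_of_card_le_one hS, Finset.sum_singleton]
  have hbot : ∀ (inst : Fintype (⊥ : SimpleGraph V).edgeSet),
      (@SimpleGraph.edgeFinset V ⊥ inst).card = 0 := by
    intro inst
    rw [Finset.card_eq_zero]
    ext e
    simp [SimpleGraph.mem_edgeFinset]
  rw [hbot]
  simp

/-- Toggling one edge. -/
def toggle (G : SimpleGraph V) (x y : V) (hxy : x ≠ y) : SimpleGraph V where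
  Adj i j := Xor' (G.Adj i j) (s(i, j) = s(x, y))
  symm := ⟨by
    rintro i j h
    rwa [show s(j, i) = s(i, j) from Sym2.eq_swap, show G.Adj j i ↔ G.Adj i j from ⟨fun h => h.symm, fun h => h.symm⟩]⟩
  loopless := ⟨by
    rintro i (⟨h, -⟩ | ⟨h, -⟩)
    · exact G.loopless.irrefl i h
    · rcases Sym2.eq_iff.mp h with ⟨rfl, rfl⟩ | ⟨rfl, rfl⟩ <;> exact hxy rfl⟩

lemma toggle_edgeFinset {G : SimpleGraph V} {x y : V} (hxy : x ≠ y) :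
    (toggle G x y hxy).edgeFinset =
      if s(x, y) ∈ G.edgeFinset then G.edgeFinset.erase s(x, y)
      else insert s(x, y) G.edgeFinset := by
  ext e
  induction e with
  | h i j =>
    rw [SimpleGraph.mem_edgeFinset]
    show Xor' (G.Adj i j) (s(i, j) = s(x, y)) ↔ _
    by_cases hmem : s(x, y) ∈ G.edgeFinset
    · rw [if_pos hmem, Finset.mem_erase, SimpleGraph.mem_edgeFinset, SimpleGraph.mem_edgeSet]
      have hadj : G.Adj x y := by rwa [SimpleGraph.mem_edgeFinset, SimpleGraph.mem_edgeSet] at hmem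
      unfold Xor'
      constructor
      · rintro (⟨h1, h2⟩ | ⟨h1, h2⟩)
        · exact ⟨h2, h1⟩
        · exfalso; apply h2
          rcases Sym2.eq_iff.mp h1 with ⟨rfl, rfl⟩ | ⟨rfl, rfl⟩
          exacts [hadj, hadj.symm]
      · rintro ⟨h1, h2⟩; exact Or.inl ⟨h2, h1⟩
    · rw [if_neg hmem, Finset.mem_insert, SimpleGraph.mem_edgeFinset, SimpleGraph.mem_edgeSet]
      have hadj : ¬ G.Adj x y := by
        rw [SimpleGraph.mem_edgeFinset, SimpleGraph.mem_edgeSet] at hmem; exact hmem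
      unfold Xor'
      constructor
      · rintro (⟨h1, h2⟩ | ⟨h1, h2⟩)
        · exact Or.inr h1
        · exact Or.inl h1
      · rintro (h1 | h1)
        · refine Or.inr ⟨h1, ?_⟩
          rcases Sym2.eq_iff.mp h1 with ⟨rfl, rfl⟩ | ⟨rfl, rfl⟩
          exacts [hadj, fun h => hadj h.symm]
        · refine Or.inl ⟨h1, fun he => hadj ?_⟩
          rcases Sym2.eq_iff.mp he with ⟨rfl, rfl⟩ | ⟨rfl, rfl⟩
          exacts [h1, h1.symm]

lemma toggle_toggle (G : SimpleGraph V) (x y : V) (hxy : x ≠ y) :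
    toggle (toggle G x y hxy) x y hxy = G := by
  ext i j
  show Xor' (Xor' (G.Adj i j) _) _ ↔ _
  unfold Xor' Xor
  tauto

lemma a_of_two_le {S : Finset V} (hS : 2 ≤ S.card) : a S = 0 := by
  obtain ⟨x, hx, y, hy, hxy⟩ := Finset.one_lt_card.mp hS
  refine Finset.sum_involution (fun G _ => toggle G x y hxy) ?_ ?_ ?_ ?_
  · intro G hG
    rw [toggle_edgeFinset]
    by_cases hmem : s(x, y) ∈ G.edgeFinset <;> simp only [hmem, if_true, if_false]
    · have hpos : 0 < G.edgeFinset.card := Finset.card_pos.mpr ⟨_, hmem⟩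
      obtain ⟨m, hm⟩ := Nat.exists_eq_succ_of_ne_zero hpos.ne'
      rw [Finset.card_erase_of_mem hmem, hm]
      simp [pow_succ]
    · rw [Finset.card_insert_of_notMem hmem]
      simp [pow_succ]
  · intro G hG _
    intro h
    have := congrArg (fun H : SimpleGraph V => H.Adj x y) h
    simp only [toggle, Xor', Xor] at this
    tauto
  · intro G hG
    rw [mem_A] at hG ⊢
    intro i j hij
    rcases hij with ⟨h1, -⟩ | ⟨h1, -⟩
    · exact hG i j h1
    · rcases Sym2.eq_iff.mp h1 with ⟨rfl, rfl⟩ | ⟨rfl, rfl⟩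
      exacts [⟨hx, hy⟩, ⟨hy, hx⟩]
  · intro G hG
    exact toggle_toggle G x y hxy

noncomputable def reachSet (G : SimpleGraph V) (x : V) : Finset V :=
  univ.filter (G.Reachable x ·)

lemma mem_reachSet {G : SimpleGraph V} {x v : V} :
    v ∈ reachSet G x ↔ G.Reachable x v := by simp [reachSet]

lemma reachSet_closed (G : SimpleGraph V) (x : V) :
    ∀ a b, G.Adj a b → a ∈ reachSet G x → b ∈ reachSet G x :=
  fun _ b hab ha => mem_reachSet.mpr ((mem_reachSet.mp ha).trans hab.reachable)

lemma self_mem_reachSet (G : SimpleGraph V) (x : V) : x ∈ reachSet G x :=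
  mem_reachSet.mpr (SimpleGraph.Reachable.refl x)

lemma reachSet_subset {G : SimpleGraph V} {S : Finset V} (hG : SuppIn G S) {x : V}
    (hx : x ∈ S) : reachSet G x ⊆ S := fun v hv =>
  mem_of_reachable (fun a b h _ => (hG a b h).2) hx (mem_reachSet.mp hv)

lemma restrict_reachSet_conn (G : SimpleGraph V) (x : V) :
    ConnOn (restrict G (reachSet G x)) (reachSet G x) := by
  constructor
  · intro i j hij
    exact ⟨hij.2.1, hij.2.2⟩
  · intro i hi j hj
    have h1 := reach_restrict (reachSet_closed G x) (self_mem_reachSet G x) (mem_reachSet.mp hi)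
    have h2 := reach_restrict (reachSet_closed G x) (self_mem_reachSet G x) (mem_reachSet.mp hj)
    exact h1.symm.trans h2

lemma restrict_suppIn (G : SimpleGraph V) (S : Finset V) : SuppIn (restrict G S) S :=
  fun _ _ h => ⟨h.2.1, h.2.2⟩

lemma sup_restrict_eq {G : SimpleGraph V} {S : Finset V} (hG : SuppIn G S) {x : V} :
    restrict G (reachSet G x) ⊔ restrict G (S \ reachSet G x) = G := by
  ext i j
  rw [SimpleGraph.sup_adj]
  constructor
  · rintro (h | h) <;> exact h.1
  · intro h
    by_cases hi : i ∈ reachSet G x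
    · exact Or.inl ⟨h, hi, reachSet_closed G x i j h hi⟩
    · have hj : j ∉ reachSet G x := fun hj => hi (reachSet_closed G x j i h.symm hj)
      exact Or.inr ⟨h, Finset.mem_sdiff.mpr ⟨(hG i j h).1, hi⟩,
        Finset.mem_sdiff.mpr ⟨(hG i j h).2, hj⟩⟩

lemma reachSet_sup_eq {G₁ G₂ : SimpleGraph V} {T U : Finset V} {x : V}
    (h1 : ConnOn G₁ T) (h2 : SuppIn G₂ U) (hTU : Disjoint T U) (hx : x ∈ T) :
    reachSet (G₁ ⊔ G₂) x = T := by
  apply Finset.Subset.antisymm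
  · intro v hv
    refine mem_of_reachable (G := G₁ ⊔ G₂) (T := T) ?_ hx (mem_reachSet.mp hv)
    intro a b hab ha
    rcases (SimpleGraph.sup_adj _ _ _ _).mp hab with h | h
    · exact (h1.1 a b h).2
    · exact absurd ha (Finset.disjoint_left.mp hTU.symm (h2 a b h).1)
  · intro v hv
    exact mem_reachSet.mpr ((h1.2 x hx v hv).mono le_sup_left)

lemma restrict_sup_left {G₁ G₂ : SimpleGraph V} {T U : Finset V}
    (h1 : SuppIn G₁ T) (h2 : SuppIn G₂ U) (hTU : Disjoint T U) :
    restrict (G₁ ⊔ G₂) T = G₁ := by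
  ext i j
  rw [restrict_adj, SimpleGraph.sup_adj]
  constructor
  · rintro ⟨h | h, hi, hj⟩
    · exact h
    · exact absurd hi (Finset.disjoint_left.mp hTU.symm (h2 i j h).1)
  · intro h
    exact ⟨Or.inl h, (h1 i j h).1, (h1 i j h).2⟩

lemma restrict_sup_right {G₁ G₂ : SimpleGraph V} {T U : Finset V}
    (h1 : SuppIn G₁ T) (h2 : SuppIn G₂ U) (hTU : Disjoint T U) :
    restrict (G₁ ⊔ G₂) U = G₂ := by
  rw [sup_comm]
  exact restrict_sup_left h2 h1 hTU.symm

lemma edge_card_congr {G H : SimpleGraph V} {i1 : Fintype G.edgeSet}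
    {i2 : Fintype H.edgeSet} (h : G = H) :
    (@SimpleGraph.edgeFinset V G i1).card = (@SimpleGraph.edgeFinset V H i2).card := by
  subst h
  congr!

lemma a_rec {S : Finset V} {x : V} (hx : x ∈ S) :
    a S = ∑ T ∈ S.powerset.filter (fun T => x ∈ T), c T * a (S \ T) := by
  have hrhs : ∀ T : Finset V, c T * a (S \ T) =
      ∑ p ∈ (C T) ×ˢ (A (S \ T)),
        ((-1 : ℤ) ^ p.1.edgeFinset.card * (-1) ^ p.2.edgeFinset.card) := by
    intro T
    rw [c, a, Finset.sum_mul_sum, Finset.sum_product]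
  rw [Finset.sum_congr rfl (fun T _ => hrhs T), Finset.sum_sigma', a]
  refine Finset.sum_nbij'
    (i := fun G => ⟨reachSet G x, (restrict G (reachSet G x), restrict G (S \ reachSet G x))⟩)
    (j := fun q => q.2.1 ⊔ q.2.2) ?_ ?_ ?_ ?_ ?_
  · intro G hG
    rw [mem_A] at hG
    rw [Finset.mem_sigma, Finset.mem_filter, Finset.mem_powerset]
    refine ⟨⟨reachSet_subset hG hx, self_mem_reachSet G x⟩, ?_⟩
    rw [Finset.mem_product]
    exact ⟨mem_C.mpr (restrict_reachSet_conn G x), mem_A.mpr (restrict_suppIn G _)⟩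
  · rintro ⟨T, G₁, G₂⟩ hq
    rw [Finset.mem_sigma, Finset.mem_filter, Finset.mem_powerset, Finset.mem_product] at hq
    obtain ⟨⟨hTS, hxT⟩, h1, h2⟩ := hq
    rw [mem_C] at h1; rw [mem_A] at h2
    rw [mem_A]
    intro i j hij
    rcases (SimpleGraph.sup_adj _ _ _ _).mp hij with h | h
    · exact ⟨hTS (h1.1 i j h).1, hTS (h1.1 i j h).2⟩
    · exact ⟨(Finset.mem_sdiff.mp (h2 i j h).1).1, (Finset.mem_sdiff.mp (h2 i j h).2).1⟩
  · intro G hG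
    rw [mem_A] at hG
    exact sup_restrict_eq hG
  · rintro ⟨T, G₁, G₂⟩ hq
    rw [Finset.mem_sigma, Finset.mem_filter, Finset.mem_powerset, Finset.mem_product] at hq
    obtain ⟨⟨hTS, hxT⟩, h1, h2⟩ := hq
    rw [mem_C] at h1; rw [mem_A] at h2
    have hdisj : Disjoint T (S \ T) := Finset.disjoint_sdiff
    have h2' : SuppIn G₂ (S \ T) := h2
    have hreach : reachSet (G₁ ⊔ G₂) x = T := reachSet_sup_eq h1 h2' hdisj hxT
    dsimp only
    refine Sigma.ext hreach ?_
    rw [heq_eq_eq, hreach]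
    rw [Prod.ext_iff]
    exact ⟨restrict_sup_left h1.1 h2' hdisj, restrict_sup_right h1.1 h2' hdisj⟩
  · intro G hG
    rw [mem_A] at hG
    dsimp only
    rw [← pow_add, ← card_edge_sup (restrict_suppIn G (reachSet G x))
      (restrict_suppIn G (S \ reachSet G x)) Finset.disjoint_sdiff]
    exact congrArg (fun n => ((-1 : ℤ)) ^ n) (edge_card_congr (sup_restrict_eq hG).symm)

lemma c_of_card_le_one {S : Finset V} (hS : S.card ≤ 1) : c S = 1 := by
  have hCA : C S = A S := by
    ext G
    rw [mem_C, mem_A]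
    refine ⟨And.left, fun h => ⟨h, fun i hi j hj => ?_⟩⟩
    rw [Finset.card_le_one.mp hS i hi j hj]
  rw [c, hCA, ← a, a_of_card_le_one hS]

lemma c_eq : ∀ (n : ℕ) (S : Finset V), S.card = n → S.Nonempty →
    c S = (-1) ^ (S.card - 1) * ((S.card - 1).factorial : ℤ) := by
  intro n
  induction n using Nat.strong_induction_on with
  | _ n ih =>
    intro S hcard hS
    rcases Nat.lt_or_ge n 2 with hn | hn
    · have h1 : S.card = 1 := le_antisymm (hcard ▸ Nat.lt_succ_iff.mp hn) hS.card_pos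
      rw [c_of_card_le_one h1.le, h1]
      simp
    · obtain ⟨x, hx⟩ := hS
      have h0 : (0 : ℤ) = ∑ T ∈ S.powerset.filter (fun T => x ∈ T), c T * a (S \ T) := by
        rw [← a_rec hx, a_of_two_le (hcard ▸ hn)]
      set J : Finset (Finset V) :=
        insert S ((S.erase x).image (fun y => S.erase y)) with hJ
      have hJsub : J ⊆ S.powerset.filter (fun T => x ∈ T) := by
        intro T hT
        rw [hJ, Finset.mem_insert, Finset.mem_image] at hT
        rw [Finset.mem_filter, Finset.mem_powerset]
        rcases hT with rfl | ⟨y, hy, rfl⟩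
        · exact ⟨le_refl _, hx⟩
        · exact ⟨Finset.erase_subset _ _, Finset.mem_erase.mpr
            ⟨fun h => (Finset.mem_erase.mp hy).1 h.symm, hx⟩⟩
      have hvanish : ∀ T ∈ S.powerset.filter (fun T => x ∈ T), T ∉ J →
          c T * a (S \ T) = 0 := by
        intro T hT hTJ
        rw [Finset.mem_filter, Finset.mem_powerset] at hT
        obtain ⟨hTS, hxT⟩ := hT
        have h2 : 2 ≤ (S \ T).card := by
          by_contra hlt
          push_neg at hlt
          interval_cases h : (S \ T).card
          · have hST2 : S ⊆ T := by
              intro v hv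
              by_contra hvT
              exact absurd (Finset.card_eq_zero.mp h ▸ Finset.mem_sdiff.mpr ⟨hv, hvT⟩)
                (Finset.notMem_empty v)
            apply hTJ
            rw [hJ, Finset.Subset.antisymm hTS hST2]
            exact Finset.mem_insert_self _ _
          · obtain ⟨y, hy⟩ := Finset.card_eq_one.mp h
            have hyS : y ∈ S := (Finset.mem_sdiff.mp (hy ▸ Finset.mem_singleton_self y)).1
            have hyT : y ∉ T := (Finset.mem_sdiff.mp (hy ▸ Finset.mem_singleton_self y)).2
            have hTy : T = S.erase y := by
              apply Finset.Subset.antisymm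
              · intro v hv
                exact Finset.mem_erase.mpr ⟨fun hvy => hyT (hvy ▸ hv), hTS hv⟩
              · intro v hv
                obtain ⟨hvy, hvS⟩ := Finset.mem_erase.mp hv
                by_contra hvT
                have : v ∈ S \ T := Finset.mem_sdiff.mpr ⟨hvS, hvT⟩
                rw [hy, Finset.mem_singleton] at this
                exact hvy this
            apply hTJ
            rw [hJ, Finset.mem_insert]
            right
            rw [Finset.mem_image]
            exact ⟨y, Finset.mem_erase.mpr ⟨fun h' => (Finset.mem_erase.mp (hTy ▸ hxT)).1 h'.symm, hyS⟩, hTy.symm⟩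
        rw [a_of_two_le h2, mul_zero]
      rw [← Finset.sum_subset hJsub (fun T hT hTJ => hvanish T hT hTJ)] at h0
      have hSnotmem : S ∉ (S.erase x).image (fun y => S.erase y) := by
        rw [Finset.mem_image]
        rintro ⟨y, hy, hEq⟩
        have hyS : y ∈ S := (Finset.mem_erase.mp hy).2
        have := Finset.card_erase_of_mem hyS
        rw [hEq] at this
        omega
      rw [hJ, Finset.sum_insert hSnotmem, Finset.sum_image
        (fun y hy y' hy' h => Finset.erase_injOn S (Finset.mem_erase.mp hy).2
          (Finset.mem_erase.mp hy').2 h)] at h0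
      have hsdiffS : S \ S = ∅ := Finset.sdiff_self S
      rw [hsdiffS, a_of_card_le_one (by simp)] at h0
      have hterm : ∀ y ∈ S.erase x, c (S.erase y) * a (S \ S.erase y) =
          (-1) ^ (n - 2) * ((n - 2).factorial : ℤ) := by
        intro y hy
        obtain ⟨hyx, hyS⟩ := Finset.mem_erase.mp hy
        have hsd : S \ S.erase y = {y} := by
          rw [Finset.sdiff_erase hyS, Finset.sdiff_self]
          simp
        have hce : (S.erase y).card = n - 1 := by
          rw [Finset.card_erase_of_mem hyS, hcard]
        have hne : (S.erase y).Nonempty := ⟨x, Finset.mem_erase.mpr ⟨fun h => hyx h.symm, hx⟩⟩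
        have := ih (n - 1) (by omega) (S.erase y) hce hne
        rw [this, hsd, a_of_card_le_one (by simp), hce, mul_one]
        congr 1 <;> congr 1 <;> omega
      rw [Finset.sum_congr rfl hterm, Finset.sum_const, Finset.card_erase_of_mem hx, hcard,
        mul_one, nsmul_eq_mul] at h0
      have hfinal : c S = -((n - 1 : ℕ) * ((-1) ^ (n - 2) * ((n - 2).factorial : ℤ))) := by
        linarith [h0]
      rw [hfinal, hcard]
      obtain ⟨m, rfl⟩ : ∃ m, n = m + 2 := ⟨n - 2, by omega⟩
      have e1 : m + 2 - 1 = m + 1 := by omega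
      have e2 : m + 2 - 2 = m := by omega
      rw [e1, e2]
      push_cast [Nat.factorial_succ]
      ring

section Partition

variable (P : Finpartition (univ : Finset V))

/-- Glue a family of graphs, one for each block. -/
def glue (p : ∀ B ∈ P.parts, SimpleGraph V) : SimpleGraph V where
  Adj i j := ∃ B, ∃ hB : B ∈ P.parts, (p B hB).Adj i j
  symm := ⟨by rintro i j ⟨B, hB, h⟩; exact ⟨B, hB, h.symm⟩⟩
  loopless := ⟨by rintro i ⟨B, hB, h⟩; exact (p B hB).loopless.irrefl i h⟩

variable {P}

lemma block_closed {G : SimpleGraph V}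
    (hG : ∀ i j, G.Reachable i j ↔ ∃ B ∈ P.parts, i ∈ B ∧ j ∈ B)
    {B : Finset V} (hB : B ∈ P.parts) :
    ∀ a b, G.Adj a b → a ∈ B → b ∈ B := by
  intro a b hab ha
  obtain ⟨B', hB', haB', hbB'⟩ := (hG a b).mp hab.reachable
  rwa [P.eq_of_mem_parts hB hB' ha haB']

lemma restrict_mem_C {G : SimpleGraph V}
    (hG : ∀ i j, G.Reachable i j ↔ ∃ B ∈ P.parts, i ∈ B ∧ j ∈ B)
    {B : Finset V} (hB : B ∈ P.parts) : restrict G B ∈ C B := by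
  rw [mem_C]
  refine ⟨restrict_suppIn G B, fun i hi j hj => ?_⟩
  exact reach_restrict (block_closed hG hB) hi ((hG i j).mpr ⟨B, hB, hi, hj⟩)

lemma glue_closed {p : ∀ B ∈ P.parts, SimpleGraph V}
    (hp : ∀ B (hB : B ∈ P.parts), SuppIn (p B hB) B)
    {B : Finset V} (hB : B ∈ P.parts) :
    ∀ a b, (glue P p).Adj a b → a ∈ B → b ∈ B := by
  rintro a b ⟨B', hB', h⟩ ha
  obtain ⟨haB', hbB'⟩ := hp B' hB' a b h
  rwa [P.eq_of_mem_parts hB hB' ha haB']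

lemma glue_induces {p : ∀ B ∈ P.parts, SimpleGraph V}
    (hp : ∀ B (hB : B ∈ P.parts), ConnOn (p B hB) B) :
    ∀ i j, (glue P p).Reachable i j ↔ ∃ B ∈ P.parts, i ∈ B ∧ j ∈ B := by
  intro i j
  obtain ⟨B, hB, hiB⟩ := P.exists_mem (Finset.mem_univ i)
  constructor
  · intro h
    exact ⟨B, hB, hiB, mem_of_reachable (glue_closed (fun B hB => (hp B hB).1) hB) hiB h⟩
  · rintro ⟨B', hB', hiB', hjB'⟩
    exact ((hp B' hB').2 i hiB' j hjB').mono (fun a b h => ⟨B', hB', h⟩)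

lemma restrict_glue {p : ∀ B ∈ P.parts, SimpleGraph V}
    (hp : ∀ B (hB : B ∈ P.parts), SuppIn (p B hB) B)
    {B : Finset V} (hB : B ∈ P.parts) :
    restrict (glue P p) B = p B hB := by
  ext i j
  rw [restrict_adj]
  constructor
  · rintro ⟨⟨B', hB', h⟩, hiB, hjB⟩
    obtain rfl : B' = B := P.eq_of_mem_parts hB' hB (hp B' hB' i j h).1 hiB
    exact h
  · intro h
    exact ⟨⟨B, hB, h⟩, (hp B hB i j h).1, (hp B hB i j h).2⟩

lemma glue_restrict {G : SimpleGraph V}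
    (hG : ∀ i j, G.Reachable i j ↔ ∃ B ∈ P.parts, i ∈ B ∧ j ∈ B) :
    glue P (fun B _ => restrict G B) = G := by
  ext i j
  constructor
  · rintro ⟨B, hB, h⟩
    exact h.1
  · intro h
    obtain ⟨B, hB, hiB, hjB⟩ := (hG i j).mp h.reachable
    exact ⟨B, hB, h, hiB, hjB⟩

lemma edge_disjoint {G₁ G₂ : SimpleGraph V} {S T : Finset V}
    (h1 : SuppIn G₁ S) (h2 : SuppIn G₂ T) (hST : Disjoint S T) :
    Disjoint G₁.edgeFinset G₂.edgeFinset := by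
  rw [Finset.disjoint_left]
  intro e he1 he2
  induction e with
  | h i j =>
    rw [SimpleGraph.mem_edgeFinset, SimpleGraph.mem_edgeSet] at he1 he2
    exact hST.forall_ne_finset (h1 _ _ he1).1 (h2 _ _ he2).1 rfl

lemma glue_edge_card {p : ∀ B ∈ P.parts, SimpleGraph V}
    (hp : ∀ B (hB : B ∈ P.parts), SuppIn (p B hB) B) :
    (glue P p).edgeFinset.card = ∑ B ∈ P.parts.attach, (p B.1 B.2).edgeFinset.card := by
  have hbU : (glue P p).edgeFinset = P.parts.attach.biUnion
      (fun B => (p B.1 B.2).edgeFinset) := by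
    ext e
    induction e with
    | h i j =>
      rw [SimpleGraph.mem_edgeFinset, Finset.mem_biUnion]
      constructor
      · rintro ⟨B, hB, h⟩
        exact ⟨⟨B, hB⟩, Finset.mem_attach _ _, SimpleGraph.mem_edgeFinset.mpr h⟩
      · rintro ⟨B, -, h⟩
        exact ⟨B.1, B.2, SimpleGraph.mem_edgeFinset.mp h⟩
  rw [hbU]
  apply Finset.card_biUnion
  intro B hB B' hB' hne
  have hvals : B.1 ≠ B'.1 := fun h => hne (Subtype.ext h)
  exact edge_disjoint (hp B.1 B.2) (hp B'.1 B'.2) (P.disjoint B.2 B'.2 hvals)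

lemma factor :
    ∑ G ∈ (univ : Finset (SimpleGraph V)).filter
        (fun G => ∀ i j, G.Reachable i j ↔ ∃ B ∈ P.parts, i ∈ B ∧ j ∈ B),
      (-1 : ℤ) ^ G.edgeFinset.card = ∏ B ∈ P.parts, c B := by
  simp only [c]
  rw [Finset.prod_sum]
  refine Finset.sum_nbij' (i := fun G => fun B _ => restrict G B)
    (j := fun p => glue P p) ?_ ?_ ?_ ?_ ?_
  · intro G hG
    rw [Finset.mem_filter] at hG
    rw [Finset.mem_pi]
    exact fun B hB => restrict_mem_C hG.2 hB
  · intro p hp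
    rw [Finset.mem_pi] at hp
    rw [Finset.mem_filter]
    exact ⟨Finset.mem_univ _, glue_induces (fun B hB => mem_C.mp (hp B hB))⟩
  · intro G hG
    rw [Finset.mem_filter] at hG
    exact glue_restrict hG.2
  · intro p hp
    rw [Finset.mem_pi] at hp
    funext B hB
    exact restrict_glue (fun B hB => (mem_C.mp (hp B hB)).1) hB
  · intro G hG
    rw [Finset.mem_filter] at hG
    rw [Finset.prod_pow_eq_pow_sum]
    congr 1
    rw [← glue_edge_card (P := P) (p := fun B _ => restrict G B)
      (fun B hB => restrict_suppIn G B)]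
    exact edge_card_congr (glue_restrict hG.2).symm

end Partition

end SignedGraphSum

open Finset

/-- A simple graph `G` on `Fin k` induces the set partition `P` via its connected
components: two vertices lie in the same block of `P` iff they are joined by a path. -/
def inducesPartition {k : ℕ} (G : SimpleGraph (Fin k))
    (P : Finpartition (Finset.univ : Finset (Fin k))) : Prop :=
  ∀ i j : Fin k, G.Reachable i j ↔ ∃ B ∈ P.parts, i ∈ B ∧ j ∈ B

/- **Statement 1.** For a partition `P` of `{1,…,k}`, the sum of `(-1)^{|E(G)|}` over all
simple graphs on `{1,…,k}` whose connected components induce exactly the partition `P`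
equals `∏_{B block of P} (-1)^{|B|-1} (|B|-1)!`. -/
open scoped Classical in
theorem signed_sum_graphs_inducing_partition (k : ℕ)
    (P : Finpartition (Finset.univ : Finset (Fin k))) :
    ∑ G ∈ (Finset.univ : Finset (SimpleGraph (Fin k))).filter
        (fun G => inducesPartition G P),
      (-1 : ℤ) ^ G.edgeFinset.card
      = ∏ B ∈ P.parts, (-1 : ℤ) ^ (B.card - 1) * (Nat.factorial (B.card - 1)) := by
  have h1 : (∏ B ∈ P.parts, SignedGraphSum.c B)
      = ∏ B ∈ P.parts, (-1 : ℤ) ^ (B.card - 1) * (Nat.factorial (B.card - 1) : ℤ) :=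
    Finset.prod_congr rfl fun B hB =>
      SignedGraphSum.c_eq B.card B rfl (P.nonempty_of_mem_parts hB)
  have h2 : ((Finset.univ : Finset (SimpleGraph (Fin k))).filter
        (fun G => inducesPartition G P))
      = ((Finset.univ : Finset (SimpleGraph (Fin k))).filter
        (fun G => ∀ i j, G.Reachable i j ↔ ∃ B ∈ P.parts, i ∈ B ∧ j ∈ B)) := by
    congr!
  rw [h2]
  convert (SignedGraphSum.factor (P := P)).trans h1 using 2
  congr!
end

section
/- Let R be a commutative Q-algebra and let f : ℕ → R[[t]] be a function such that t^n divides f(n) for all n ≥ 1. Then 1 + ∑_{k≥1} ∑_{P partition of {1,...,k}} (a(P)/k!)·∏_{blocks B of P} f(|B|) = exp(∑_{u≥1} (-1)^{u-1} f(u)/u), where a(P) = ∏_{blocks B of P} (-1)^{|B|-1}(|B|-1)!, and exp is the formal exponential power series. -/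
open Finset PowerSeries

/-- The sum `∑_{k≥0} F k` of a family of formal power series such that `t^k ∣ F k`:
in each degree `d` only the terms with `k ≤ d` contribute, so the coefficientwise
truncated sum below is the genuine infinite sum. -/
noncomputable def seriesSum {R : Type*} [CommRing R] (F : ℕ → PowerSeries R) :
    PowerSeries R :=
  PowerSeries.mk fun d => ∑ k ∈ Finset.range (d + 1), PowerSeries.coeff d (F k)

/-- The formal exponential `exp g = ∑_{s≥0} g^s / s!` of a power series `g` with zero
constant term over a commutative `ℚ`-algebra: in each degree `d` only `s ≤ d`
contribute. -/
noncomputable def formalExp {R : Type*} [CommRing R] [Algebra ℚ R] (g : PowerSeries R) :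
    PowerSeries R :=
  PowerSeries.mk fun d => ∑ s ∈ Finset.range (d + 1),
    PowerSeries.coeff d (algebraMap ℚ (PowerSeries R) (1 / (Nat.factorial s : ℚ)) * g ^ s)

/-- The coefficient `a(P) = ∏_{B block of P} (-1)^{|B|-1} (|B|-1)!` (as a rational). -/
def aCoef {k : ℕ} (P : Finpartition (Finset.univ : Finset (Fin k))) : ℚ :=
  ∏ B ∈ P.parts, (-1 : ℚ) ^ (B.card - 1) * (Nat.factorial (B.card - 1) : ℚ)


section Counting

variable {ι : Type*} {β : ι → Type*}

def fiberFstEquiv (i : ι) : {x : Σ j, β j // x.1 = i} ≃ β i where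
  toFun x := x.2 ▸ x.1.2
  invFun b := ⟨⟨i, b⟩, rfl⟩
  left_inv := by rintro ⟨⟨j, b⟩, rfl⟩; rfl
  right_inv b := rfl

def equivSigmaDecomp {α : Type*} :
    (α ≃ Σ i, β i) ≃ (Σ g : α → ι, ∀ i, {a // g a = i} ≃ β i) where
  toFun σ := ⟨fun a => (σ a).1, fun i =>
    (σ.subtypeEquiv fun a => Iff.rfl).trans (fiberFstEquiv i)⟩
  invFun x := (Equiv.sigmaFiberEquiv x.1).symm.trans (Equiv.sigmaCongrRight x.2)
  left_inv σ := by
    apply Equiv.ext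
    intro a
    rfl
  right_inv := by
    rintro ⟨g, e⟩
    refine Sigma.ext rfl (heq_of_eq ?_)
    funext i
    apply Equiv.ext
    rintro ⟨a, rfl⟩
    rfl

theorem card_equiv_eq {γ δ : Type*} [Fintype γ] [Fintype δ] [DecidableEq γ] [DecidableEq δ] :
    Fintype.card (γ ≃ δ) =
      if Fintype.card γ = Fintype.card δ then (Fintype.card γ).factorial else 0 := by
  split_ifs with h
  · exact Fintype.card_equiv (Fintype.equivOfCardEq h)
  · rw [Fintype.card_eq_zero_iff]
    exact ⟨fun e => h (Fintype.card_congr e)⟩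

/-- Counting functions with prescribed fiber cardinalities. -/
theorem card_fiber_count {α : Type*} [Fintype α] [DecidableEq α] {s : ℕ} (v : Fin s → ℕ)
    (hv : ∑ i, v i = Fintype.card α) :
    (univ.filter fun g : α → Fin s =>
        ∀ i, (univ.filter fun a => g a = i).card = v i).card * ∏ i, (v i).factorial
      = (Fintype.card α).factorial := by
  classical
  have h1 : Fintype.card (α ≃ Σ i, Fin (v i)) = (Fintype.card α).factorial := by
    refine Fintype.card_equiv (Fintype.equivOfCardEq ?_)
    simp [hv]
  rw [← h1, Fintype.card_congr (equivSigmaDecomp (α := α) (β := fun i => Fin (v i))),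
    Fintype.card_sigma]
  have h2 : ∀ g : α → Fin s, Fintype.card (∀ i, {a // g a = i} ≃ Fin (v i))
      = if (∀ i, (univ.filter fun a => g a = i).card = v i)
          then ∏ i, (v i).factorial else 0 := by
    intro g
    rw [Fintype.card_pi]
    by_cases hg : ∀ i, (univ.filter fun a => g a = i).card = v i
    · rw [if_pos hg]
      refine Finset.prod_congr rfl fun i _ => ?_
      rw [card_equiv_eq, Fintype.card_subtype, Fintype.card_fin, hg i, if_pos rfl]
    · rw [if_neg hg]
      push_neg at hg
      obtain ⟨i, hi⟩ := hg
      refine Finset.prod_eq_zero (mem_univ i) ?_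
      rw [card_equiv_eq, Fintype.card_subtype, Fintype.card_fin, if_neg hi]
  rw [Finset.sum_congr rfl fun g _ => h2 g, Finset.sum_ite, Finset.sum_const,
    Finset.sum_const_zero, add_zero, smul_eq_mul]

end Counting


section Partitions

variable {k s : ℕ}

/-- The fiber of `g` over `i`, as a finset. -/
def fib (g : Fin k → Fin s) (i : Fin s) : Finset (Fin k) := univ.filter fun x => g x = i

lemma mem_fib {g : Fin k → Fin s} {i : Fin s} {x : Fin k} : x ∈ fib g i ↔ g x = i := by
  simp [fib]

instance kerDec (g : Fin k → Fin s) : DecidableRel (Setoid.ker g).r :=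
  fun a b => decidable_of_iff (g a = g b) Setoid.ker_def.symm

/-- The kernel partition of a function. -/
def kerPart (g : Fin k → Fin s) : Finpartition (univ : Finset (Fin k)) :=
  Finpartition.ofSetoid (Setoid.ker g)

lemma kerPart_part (g : Fin k → Fin s) (a : Fin k) :
    (kerPart g).part a = fib g (g a) := by
  ext b
  rw [kerPart, Finpartition.mem_part_ofSetoid_iff_rel, Setoid.ker_def, mem_fib, eq_comm]

lemma fib_nonempty {g : Fin k → Fin s} (hg : Function.Surjective g) (i : Fin s) :
    (fib g i).Nonempty := by
  obtain ⟨a, ha⟩ := hg i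
  exact ⟨a, mem_fib.2 ha⟩

lemma fib_injective {g : Fin k → Fin s} (hg : Function.Surjective g) :
    Function.Injective (fib g) := by
  intro i j h
  obtain ⟨a, ha⟩ := fib_nonempty hg i
  have  : a ∈ fib g j := h ▸ ha
  rw [mem_fib] at ha this
  rw [← ha, this]

lemma kerPart_parts {g : Fin k → Fin s} (hg : Function.Surjective g) :
    (kerPart g).parts = univ.image (fib g) := by
  ext B
  constructor
  · intro hB
    obtain ⟨a, ha⟩ := (kerPart g).nonempty_of_mem_parts hB
    have : (kerPart g).part a = B := (kerPart g).part_eq_of_mem hB ha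
    rw [kerPart_part] at this
    exact this ▸ mem_image_of_mem _ (mem_univ _)
  · intro hB
    obtain ⟨i, _, rfl⟩ := mem_image.1 hB
    obtain ⟨a, ha⟩ := hg i
    have : (kerPart g).part a = fib g i := by rw [kerPart_part, ha]
    exact this ▸ (kerPart g).part_mem.2 (mem_univ a)

lemma card_parts_kerPart {g : Fin k → Fin s} (hg : Function.Surjective g) :
    (kerPart g).parts.card = s := by
  rw [kerPart_parts hg, card_image_of_injective _ (fib_injective hg), card_univ,
    Fintype.card_fin]

lemma prod_fib_eq {M : Type*} [CommMonoid M] (W : ℕ → M) {g : Fin k → Fin s}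
    (hg : Function.Surjective g) :
    ∏ B ∈ (kerPart g).parts, W B.card = ∏ i, W (fib g i).card := by
  rw [kerPart_parts hg, prod_image fun x _ y _ h => fib_injective hg h]

theorem card_surj_kerPart_eq (P : Finpartition (univ : Finset (Fin k))) :
    (univ.filter fun g : Fin k → Fin s =>
        Function.Surjective g ∧ kerPart g = P).card
      = if P.parts.card = s then s.factorial else 0 := by
  classical
  split_ifs with h
  · set Θ : ({x // x ∈ P.parts} ≃ Fin s) → (Fin k → Fin s) :=
      fun ℓ x => ℓ ⟨P.part x, P.part_mem.2 (mem_univ x)⟩ with hΘ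
    have hinj : Function.Injective Θ := by
      intro ℓ ℓ' hh
      apply Equiv.ext
      rintro ⟨B, hB⟩
      obtain ⟨a, ha⟩ := P.nonempty_of_mem_parts hB
      have hpa : (⟨P.part a, P.part_mem.2 (mem_univ a)⟩ : {x // x ∈ P.parts}) = ⟨B, hB⟩ :=
        Subtype.ext (P.part_eq_of_mem hB ha)
      have := congrFun hh a
      rw [hΘ] at this
      simpa [hpa] using this
    have hset : (univ.filter fun g : Fin k → Fin s =>
        Function.Surjective g ∧ kerPart g = P) = univ.image Θ := by
      ext g
      simp only [mem_filter, mem_univ, true_and, mem_image]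
      constructor
      · rintro ⟨hsurj, rfl⟩
        set m : Fin s → {x // x ∈ (kerPart g).parts} :=
          fun i => ⟨fib g i, by rw [kerPart_parts hsurj]; exact mem_image_of_mem _ (mem_univ i)⟩
          with hm
        have minj : Function.Injective m := fun i j hij =>
          fib_injective hsurj (Subtype.ext_iff.1 hij)
        have mbij : Function.Bijective m := by
          rw [Fintype.bijective_iff_injective_and_card]
          exact ⟨minj, by simp [Fintype.card_coe, card_parts_kerPart hsurj]⟩
        refine ⟨(Equiv.ofBijective m mbij).symm, ?_⟩
        funext x
        rw [hΘ, Equiv.symm_apply_eq]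
        apply Subtype.ext
        show (kerPart g).part x = fib g (g x)
        exact kerPart_part g x
      · rintro ⟨ℓ, rfl⟩
        have hfib : ∀ i, fib (Θ ℓ) i = (ℓ.symm i : Finset (Fin k)) := by
          intro i
          ext x
          simp only [mem_fib, hΘ]
          constructor
          · intro hx
            have : (⟨P.part x, P.part_mem.2 (mem_univ x)⟩ : {x // x ∈ P.parts}) = ℓ.symm i := by
              rw [Equiv.eq_symm_apply, hx]
            have := Subtype.ext_iff.1 this
            rw [← this]
            exact P.mem_part (mem_univ x)
          · intro hx
            have : P.part x = ((ℓ.symm i : {x // x ∈ P.parts}) : Finset (Fin k)) :=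
              P.part_eq_of_mem (ℓ.symm i).2 hx
            have h2 : (⟨P.part x, P.part_mem.2 (mem_univ x)⟩ : {x // x ∈ P.parts})
                = ℓ.symm i := Subtype.ext this
            rw [h2, Equiv.apply_symm_apply]
        have hsurj : Function.Surjective (Θ ℓ) := by
          intro i
          obtain ⟨a, ha⟩ := P.nonempty_of_mem_parts (ℓ.symm i).2
          have : a ∈ fib (Θ ℓ) i := by rw [hfib i]; exact ha
          exact ⟨a, mem_fib.1 this⟩
        refine ⟨hsurj, ?_⟩
        apply Finpartition.ext
        rw [kerPart_parts hsurj]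
        ext B
        simp only [mem_image, mem_univ, true_and]
        constructor
        · rintro ⟨i, rfl⟩
          rw [hfib i]
          exact (ℓ.symm i).2
        · intro hB
          refine ⟨ℓ ⟨B, hB⟩, ?_⟩
          rw [hfib, Equiv.symm_apply_apply]
    rw [hset, card_image_of_injective _ hinj, card_univ, Fintype.card_equiv
      (Fintype.equivOfCardEq (by simp [Fintype.card_coe, h])), Fintype.card_coe, h]
  · rw [Finset.card_eq_zero, Finset.filter_eq_empty_iff]
    rintro g - ⟨h1, rfl⟩
    exact h (card_parts_kerPart h1)

end Partitions

section Sums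
open Finset
variable {A : Type*} [CommRing A]

theorem sum_surj_prod_eq_partitions (W : ℕ → A) (k s : ℕ) :
    ∑ g ∈ univ.filter (fun g : Fin k → Fin s => Function.Surjective g),
        ∏ i, W (fib g i).card
      = ∑ P : Finpartition (univ : Finset (Fin k)),
          (if P.parts.card = s then s.factorial else 0) • ∏ B ∈ P.parts, W B.card := by
  classical
  rw [← Finset.sum_fiberwise_of_maps_to (g := kerPart)
      (t := (univ : Finset (Finpartition (univ : Finset (Fin k)))))
      (fun g _ => mem_univ _) (fun g => ∏ i, W (fib g i).card)]
  refine Finset.sum_congr rfl fun P _ => ?_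
  rw [← card_surj_kerPart_eq (s := s) P, Finset.filter_filter, ← Finset.sum_const]
  refine Finset.sum_congr rfl fun g hg => ?_
  simp only [mem_filter, mem_univ, true_and] at hg
  rw [← hg.2, prod_fib_eq W hg.1]

theorem sum_surj_prod_eq_compositions (W : ℕ → A) (k s : ℕ) :
    ∑ g ∈ univ.filter (fun g : Fin k → Fin s => Function.Surjective g),
        ∏ i, W (fib g i).card
      = ∑ v ∈ (Fintype.piFinset fun _ : Fin s => Icc 1 k).filter (fun v => ∑ i, v i = k),
          (univ.filter fun g : Fin k → Fin s =>
            ∀ i, (fib g i).card = v i).card • ∏ i, W (v i) := by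
  classical
  rw [← Finset.sum_fiberwise_of_maps_to (g := fun (g : Fin k → Fin s) (i : Fin s) =>
      (fib g i).card)
      (t := (Fintype.piFinset fun _ : Fin s => Icc 1 k).filter (fun v => ∑ i, v i = k))
      ?_ (fun g => ∏ i, W (fib g i).card)]
  · refine Finset.sum_congr rfl fun v hv => ?_
    simp only [mem_filter, Fintype.mem_piFinset, mem_Icc] at hv
    have hfil : (univ.filter (fun g : Fin k → Fin s => Function.Surjective g)).filter
        (fun g => (fun i => (fib g i).card) = v)
        = univ.filter fun g : Fin k → Fin s => ∀ i, (fib g i).card = v i := by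
      ext g
      simp only [mem_filter, mem_univ, true_and, funext_iff]
      constructor
      · rintro ⟨-, h2⟩; exact h2
      · intro h2
        refine ⟨fun i => ?_, h2⟩
        have : 0 < (fib g i).card := by rw [h2 i]; exact lt_of_lt_of_le one_pos (hv.1 i).1
        obtain ⟨a, ha⟩ := Finset.card_pos.1 this
        exact ⟨a, mem_fib.1 ha⟩
    rw [hfil, ← Finset.sum_const]
    refine Finset.sum_congr rfl fun g hg => ?_
    simp only [mem_filter, mem_univ, true_and, funext_iff] at hg
    exact Finset.prod_congr rfl fun i _ => by rw [hg i]
  · intro g hg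
    simp only [mem_filter, mem_univ, true_and] at hg
    simp only [mem_filter, Fintype.mem_piFinset, mem_Icc]
    refine ⟨fun i => ⟨Finset.card_pos.2 (fib_nonempty hg i), ?_⟩, ?_⟩
    · calc (fib g i).card ≤ (univ : Finset (Fin k)).card := Finset.card_filter_le _ _
        _ = k := by rw [card_univ, Fintype.card_fin]
    · have := Finset.card_eq_sum_card_fiberwise
        (f := g) (s := (univ : Finset (Fin k))) (t := univ) (fun x _ => mem_univ _)
      rw [card_univ, Fintype.card_fin] at this
      simpa only [fib] using this.symm

theorem key_identity {A : Type*} [CommRing A] [Algebra ℚ A] (f : ℕ → A) (k : ℕ) :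
    (∑ P : Finpartition (univ : Finset (Fin k)),
        algebraMap ℚ A (aCoef P / (Nat.factorial k : ℚ)) * ∏ B ∈ P.parts, f B.card)
      = ∑ s ∈ Finset.range (k + 1), algebraMap ℚ A (1 / (Nat.factorial s : ℚ)) *
          ∑ v ∈ (Fintype.piFinset fun _ : Fin s => Icc 1 k).filter (fun v => ∑ i, v i = k),
            ∏ i, (algebraMap ℚ A ((-1 : ℚ) ^ (v i - 1) / (v i : ℚ)) * f (v i)) := by
  classical
  set c : ℕ → ℚ := fun u => (-1 : ℚ) ^ (u - 1) / (u : ℚ) with hc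
  set W : ℕ → A := fun u => algebraMap ℚ A (c u * (Nat.factorial u : ℚ)) * f u with hW
  have fact1 : ∀ u : ℕ, 1 ≤ u → c u * (Nat.factorial u : ℚ)
      = (-1 : ℚ) ^ (u - 1) * (Nat.factorial (u - 1) : ℚ) := by
    intro u hu
    have hu0 : (u : ℚ) ≠ 0 := Nat.cast_ne_zero.2 (by omega)
    have hfac : (Nat.factorial u : ℚ) = (u : ℚ) * (Nat.factorial (u - 1) : ℚ) := by
      rw [← Nat.mul_factorial_pred (by omega : u ≠ 0)]
      push_cast
      ring
    rw [hc, hfac]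
    field_simp
  have hLHS : ∀ P : Finpartition (univ : Finset (Fin k)),
      algebraMap ℚ A (aCoef P / (Nat.factorial k : ℚ)) * ∏ B ∈ P.parts, f B.card
        = algebraMap ℚ A (1 / (Nat.factorial k : ℚ)) * ∏ B ∈ P.parts, W B.card := by
    intro P
    have h1 : ∏ B ∈ P.parts, W B.card
        = algebraMap ℚ A (aCoef P) * ∏ B ∈ P.parts, f B.card := by
      simp only [hW]
      rw [Finset.prod_mul_distrib, ← map_prod]
      congr 2
      simp only [aCoef]
      refine Finset.prod_congr rfl fun B hB => ?_
      exact fact1 B.card (Finset.card_pos.2 (P.nonempty_of_mem_parts hB))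
    have hsc : aCoef P / (Nat.factorial k : ℚ) = 1 / (Nat.factorial k : ℚ) * aCoef P := by
      ring
    rw [hsc, map_mul, mul_assoc, ← h1]
  have hA : ∀ s : ℕ,
      ∑ v ∈ (Fintype.piFinset fun _ : Fin s => Icc 1 k).filter (fun v => ∑ i, v i = k),
          ∏ i, (algebraMap ℚ A (c (v i)) * f (v i))
        = algebraMap ℚ A (1 / (Nat.factorial k : ℚ)) *
            ∑ g ∈ univ.filter (fun g : Fin k → Fin s => Function.Surjective g),
              ∏ i, W (fib g i).card := by
    intro s
    rw [sum_surj_prod_eq_compositions W k s, Finset.mul_sum]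
    refine Finset.sum_congr rfl fun v hv => ?_
    simp only [mem_filter, Fintype.mem_piFinset, mem_Icc] at hv
    set N : ℕ := (univ.filter fun g : Fin k → Fin s => ∀ i, (fib g i).card = v i).card
      with hNdef
    have hcnt : N * ∏ i, (v i).factorial = k.factorial := by
      have := @card_fiber_count (Fin k) _ (instDecidableEqFin k) s v (by rw [hv.2, Fintype.card_fin])
      rw [Fintype.card_fin] at this
      rw [hNdef]
      rw [← this]
      congr 2
    have hNfac : (N : ℚ) * ∏ i, ((v i).factorial : ℚ) = (k.factorial : ℚ) := by
      exact_mod_cast hcnt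
    have hk0 : (k.factorial : ℚ) ≠ 0 := Nat.cast_ne_zero.2 (Nat.factorial_ne_zero _)
    have hscal : (1 / (k.factorial : ℚ)) * ((N : ℚ) *
          ∏ i, (c (v i) * ((v i).factorial : ℚ)))
        = ∏ i, c (v i) := by
      have h2 : (N : ℚ) * ∏ i, (c (v i) * ((v i).factorial : ℚ))
          = (k.factorial : ℚ) * ∏ i, c (v i) := by
        rw [Finset.prod_mul_distrib, ← hNfac]
        ring
      rw [h2, one_div, inv_mul_cancel_left₀ hk0]
    calc ∏ i, (algebraMap ℚ A (c (v i)) * f (v i))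
        = algebraMap ℚ A (∏ i, c (v i)) * ∏ i, f (v i) := by
          rw [Finset.prod_mul_distrib, map_prod]
      _ = algebraMap ℚ A ((1 / (k.factorial : ℚ)) * ((N : ℚ) *
            ∏ i, (c (v i) * ((v i).factorial : ℚ)))) * ∏ i, f (v i) := by
          rw [hscal]
      _ = algebraMap ℚ A (1 / (Nat.factorial k : ℚ)) * (N • ∏ i, W (v i)) := by
          simp only [hW, nsmul_eq_mul, map_mul, map_natCast, map_prod,
            Finset.prod_mul_distrib]
          ring
  calc
    (∑ P : Finpartition (univ : Finset (Fin k)),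
        algebraMap ℚ A (aCoef P / (Nat.factorial k : ℚ)) * ∏ B ∈ P.parts, f B.card)
      = ∑ P : Finpartition (univ : Finset (Fin k)),
          ∑ s ∈ Finset.range (k + 1), algebraMap ℚ A (1 / (Nat.factorial s : ℚ)) *
            ((if P.parts.card = s then s.factorial else 0) •
              (algebraMap ℚ A (1 / (Nat.factorial k : ℚ)) * ∏ B ∈ P.parts, W B.card)) := by
        refine Finset.sum_congr rfl fun P _ => ?_
        rw [hLHS P, Finset.sum_eq_single P.parts.card]
        · rw [if_pos rfl, nsmul_eq_mul, ← mul_assoc, ← mul_assoc]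
          have h3 : algebraMap ℚ A (1 / (Nat.factorial P.parts.card : ℚ)) *
              ((P.parts.card.factorial : ℕ) : A) = 1 := by
            rw [← map_natCast (algebraMap ℚ A), ← map_mul, one_div, inv_mul_cancel₀, map_one]
            exact Nat.cast_ne_zero.2 (Nat.factorial_ne_zero _)
          rw [h3, one_mul]
        · intro s _ hs
          rw [if_neg (fun h => hs h.symm), zero_smul, mul_zero]
        · intro h
          exfalso
          apply h
          rw [Finset.mem_range, Nat.lt_succ_iff]
          calc P.parts.card ≤ (univ : Finset (Fin k)).card := P.card_parts_le_card
            _ = k := by rw [card_univ, Fintype.card_fin]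
    _ = ∑ s ∈ Finset.range (k + 1), algebraMap ℚ A (1 / (Nat.factorial s : ℚ)) *
          (algebraMap ℚ A (1 / (Nat.factorial k : ℚ)) *
            ∑ g ∈ univ.filter (fun g : Fin k → Fin s => Function.Surjective g),
              ∏ i, W (fib g i).card) := by
        rw [Finset.sum_comm]
        refine Finset.sum_congr rfl fun s _ => ?_
        rw [sum_surj_prod_eq_partitions W k s, Finset.mul_sum, Finset.mul_sum]
        refine Finset.sum_congr rfl fun P _ => ?_
        rw [mul_smul_comm, mul_smul_comm, mul_smul_comm]
    _ = ∑ s ∈ Finset.range (k + 1), algebraMap ℚ A (1 / (Nat.factorial s : ℚ)) *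
          ∑ v ∈ (Fintype.piFinset fun _ : Fin s => Icc 1 k).filter (fun v => ∑ i, v i = k),
            ∏ i, (algebraMap ℚ A (c (v i)) * f (v i)) := by
        refine Finset.sum_congr rfl fun s _ => ?_
        rw [hA s]

end Sums

section PSeries
open Finset PowerSeries

variable {R : Type*} [CommRing R]

lemma coeff_seriesSum (F : ℕ → PowerSeries R) (d : ℕ) :
    (PowerSeries.coeff d) (seriesSum F)
      = ∑ k ∈ Finset.range (d + 1), (PowerSeries.coeff d) (F k) := by
  rw [seriesSum, PowerSeries.coeff_mk]

lemma coeff_eq_of_dvd {a b : PowerSeries R} {d : ℕ}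
    (h : (PowerSeries.X : PowerSeries R) ^ (d + 1) ∣ a - b) :
    (PowerSeries.coeff d) a = (PowerSeries.coeff d) b := by
  have h2 := (PowerSeries.X_pow_dvd_iff.1 h) d (Nat.lt_succ_self d)
  rw [map_sub] at h2
  exact sub_eq_zero.1 h2

lemma seriesSum_mod (F : ℕ → PowerSeries R)
    (h : ∀ u, (PowerSeries.X : PowerSeries R) ^ u ∣ F u) (d : ℕ) :
    (PowerSeries.X : PowerSeries R) ^ (d + 1) ∣
      seriesSum F - ∑ u ∈ Finset.range (d + 1), F u := by
  rw [PowerSeries.X_pow_dvd_iff]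
  intro m hm
  rw [map_sub, coeff_seriesSum, map_sum]
  have h3 : ∑ u ∈ Finset.range (d + 1), (PowerSeries.coeff m) (F u)
      = ∑ u ∈ Finset.range (m + 1), (PowerSeries.coeff m) (F u) := by
    symm
    apply Finset.sum_subset (Finset.range_subset_range.2 (by omega))
    intro u hu hnu
    simp only [Finset.mem_range] at hu hnu
    exact PowerSeries.X_pow_dvd_iff.1 (h u) m (by omega)
  rw [h3, sub_self]

lemma sum_pow_expand {A : Type*} [CommSemiring A] (U : Finset ℕ) (F : ℕ → A) (s : ℕ) :
    (∑ u ∈ U, F u) ^ s = ∑ v ∈ Fintype.piFinset (fun _ : Fin s => U), ∏ i, F (v i) := by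
  rw [← Fin.prod_const s (∑ u ∈ U, F u), Finset.prod_univ_sum]

end PSeries

open Finset PowerSeries


/- **Statement 3.** For a commutative `ℚ`-algebra `R` and `f : ℕ → R[[t]]` with
`t^n ∣ f n` for all `n ≥ 1`,
`1 + ∑_{k≥1} ∑_{P partition of [k]} (a(P)/k!) ∏_{B block} f(|B|)
  = exp (∑_{u≥1} (-1)^{u-1} f(u)/u)`. -/
theorem generating_series_partitions (R : Type*) [CommRing R] [Algebra ℚ R]
    (f : ℕ → PowerSeries R) (hf : ∀ n, 1 ≤ n → (PowerSeries.X : PowerSeries R) ^ n ∣ f n) :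
    1 + seriesSum (fun k =>
        if k = 0 then 0 else
          ∑ P : Finpartition (Finset.univ : Finset (Fin k)),
            algebraMap ℚ (PowerSeries R) (aCoef P / (Nat.factorial k : ℚ)) *
              ∏ B ∈ P.parts, f B.card)
      = formalExp (seriesSum (fun u =>
          if u = 0 then 0 else
            algebraMap ℚ (PowerSeries R) ((-1 : ℚ) ^ (u - 1) / (u : ℚ)) * f u)) := by
  classical
  apply PowerSeries.ext
  intro d
  set hterm : ℕ → PowerSeries R := fun u =>
    if u = 0 then 0 else
      algebraMap ℚ (PowerSeries R) ((-1 : ℚ) ^ (u - 1) / (u : ℚ)) * f u with hhterm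
  set Aterm : ℕ → PowerSeries R := fun k =>
    if k = 0 then 0 else
      ∑ P : Finpartition (Finset.univ : Finset (Fin k)),
        algebraMap ℚ (PowerSeries R) (aCoef P / (Nat.factorial k : ℚ)) *
          ∏ B ∈ P.parts, f B.card with hAterm
  set E : ℕ → PowerSeries R := fun k =>
    ∑ s ∈ Finset.range (k + 1), algebraMap ℚ (PowerSeries R) (1 / (Nat.factorial s : ℚ)) *
      ∑ v ∈ (Fintype.piFinset fun _ : Fin s => Finset.Icc 1 k).filter
          (fun v => ∑ i, v i = k),
        ∏ i, (algebraMap ℚ (PowerSeries R) ((-1 : ℚ) ^ (v i - 1) / (v i : ℚ)) * f (v i))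
    with hE
  have hE0 : E 0 = 1 := by
    have hsingle : ((Fintype.piFinset fun _ : Fin 0 => Finset.Icc 1 0).filter
        (fun v => ∑ i, v i = 0)) = {fun i => i.elim0} := by
      apply Finset.eq_singleton_iff_unique_mem.2
      constructor
      · simp only [Finset.mem_filter, Fintype.mem_piFinset]
        constructor
        · intro i
          exact i.elim0
        · simp
      · intro v _
        funext i
        exact i.elim0
    rw [hE]
    simp only []
    rw [Finset.sum_range_one, hsingle, Finset.sum_singleton]
    simp
  have hEk : ∀ k, k ≠ 0 → E k = Aterm k := by
    intro k hk
    simp only [hE, hAterm, if_neg hk]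
    exact (key_identity f k).symm
  have hL : (PowerSeries.coeff d) (1 + seriesSum Aterm)
      = ∑ k ∈ Finset.range (d + 1), (PowerSeries.coeff d) (E k) := by
    rw [map_add, coeff_seriesSum]
    have hsplit : ∀ k ∈ Finset.range (d + 1), (PowerSeries.coeff d) (E k)
        = (PowerSeries.coeff d) (Aterm k) +
            (if k = 0 then (PowerSeries.coeff d) (1 : PowerSeries R) else 0) := by
      intro k _
      by_cases hk : k = 0
      · subst hk
        rw [hE0, if_pos rfl]
        have : Aterm 0 = 0 := by simp [hAterm]
        rw [this, map_zero, zero_add]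
      · rw [hEk k hk, if_neg hk, add_zero]
    rw [Finset.sum_congr rfl hsplit, Finset.sum_add_distrib,
      Finset.sum_ite_eq' (Finset.range (d + 1)) 0 (fun _ => (PowerSeries.coeff d)
        (1 : PowerSeries R)), if_pos (by simp), add_comm]
  have hXh : ∀ u, (PowerSeries.X : PowerSeries R) ^ u ∣ hterm u := by
    intro u
    by_cases hu : u = 0
    · subst hu
      simp [hhterm]
    · simp only [hhterm, if_neg hu]
      exact (hf u (by omega)).mul_left _
  have hgH := seriesSum_mod hterm hXh d
  have hR : (PowerSeries.coeff d) (formalExp (seriesSum hterm))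
      = ∑ k ∈ Finset.range (d + 1), (PowerSeries.coeff d) (E k) := by
    calc (PowerSeries.coeff d) (formalExp (seriesSum hterm))
        = ∑ s ∈ Finset.range (d + 1), (PowerSeries.coeff d)
            (algebraMap ℚ (PowerSeries R) (1 / (Nat.factorial s : ℚ)) *
              seriesSum hterm ^ s) := by
          rw [formalExp, PowerSeries.coeff_mk]
      _ = ∑ s ∈ Finset.range (d + 1), (PowerSeries.coeff d)
            (algebraMap ℚ (PowerSeries R) (1 / (Nat.factorial s : ℚ)) *
              (∑ u ∈ Finset.range (d + 1), hterm u) ^ s) := by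
          refine Finset.sum_congr rfl fun s _ => ?_
          apply coeff_eq_of_dvd
          rw [← mul_sub]
          exact Dvd.dvd.mul_left (hgH.trans (sub_dvd_pow_sub_pow _ _ s)) _
      _ = ∑ s ∈ Finset.range (d + 1),
            ∑ v ∈ Fintype.piFinset (fun _ : Fin s => Finset.range (d + 1)),
              (PowerSeries.coeff d)
                (algebraMap ℚ (PowerSeries R) (1 / (Nat.factorial s : ℚ)) *
                  ∏ i, hterm (v i)) := by
          refine Finset.sum_congr rfl fun s _ => ?_
          rw [sum_pow_expand, Finset.mul_sum, map_sum]
      _ = ∑ s ∈ Finset.range (d + 1),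
            ∑ v ∈ (Fintype.piFinset (fun _ : Fin s => Finset.range (d + 1))).filter
                (fun v => (∀ i, 1 ≤ v i) ∧ ∑ i, v i ≤ d),
              (PowerSeries.coeff d)
                (algebraMap ℚ (PowerSeries R) (1 / (Nat.factorial s : ℚ)) *
                  ∏ i, hterm (v i)) := by
          refine Finset.sum_congr rfl fun s _ => ?_
          refine (Finset.sum_filter_of_ne fun v _ hne => ?_).symm
          constructor
          · intro i
            by_contra h0
            apply hne
            have hvi : v i = 0 := by omega
            have : ∏ i, hterm (v i) = 0 := by
              refine Finset.prod_eq_zero (Finset.mem_univ i) ?_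
              rw [hvi]
              simp [hhterm]
            rw [this, mul_zero, map_zero]
          · by_contra hgt
            apply hne
            have hdvd : (PowerSeries.X : PowerSeries R) ^ (∑ i, v i) ∣ ∏ i, hterm (v i) := by
              rw [← Finset.prod_pow_eq_pow_sum]
              exact Finset.prod_dvd_prod_of_dvd _ _ fun i _ => hXh (v i)
            exact PowerSeries.X_pow_dvd_iff.1 (hdvd.mul_left _) d (by omega)
      _ = ∑ s ∈ Finset.range (d + 1), ∑ k ∈ Finset.range (d + 1),
            ∑ v ∈ ((Fintype.piFinset (fun _ : Fin s => Finset.range (d + 1))).filter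
                (fun v => (∀ i, 1 ≤ v i) ∧ ∑ i, v i ≤ d)).filter
                  (fun v => ∑ i, v i = k),
              (PowerSeries.coeff d)
                (algebraMap ℚ (PowerSeries R) (1 / (Nat.factorial s : ℚ)) *
                  ∏ i, hterm (v i)) := by
          refine Finset.sum_congr rfl fun s _ => ?_
          rw [Finset.sum_fiberwise_of_maps_to (g := fun v : Fin s → ℕ => ∑ i, v i) ?_]
          intro v hv
          simp only [Finset.mem_filter] at hv
          simp only [Finset.mem_range]
          omega
      _ = ∑ s ∈ Finset.range (d + 1), ∑ k ∈ Finset.range (d + 1),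
            ∑ v ∈ (Fintype.piFinset fun _ : Fin s => Finset.Icc 1 k).filter
                (fun v => ∑ i, v i = k),
              (PowerSeries.coeff d)
                (algebraMap ℚ (PowerSeries R) (1 / (Nat.factorial s : ℚ)) *
                  ∏ i, hterm (v i)) := by
          refine Finset.sum_congr rfl fun s _ => Finset.sum_congr rfl fun k hk => ?_
          have hkd : k ≤ d := by
            simp only [Finset.mem_range] at hk
            omega
          congr 1
          rw [Finset.filter_filter]
          ext v
          simp only [Finset.mem_filter, Fintype.mem_piFinset, Finset.mem_range,
            Finset.mem_Icc]
          constructor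
          · rintro ⟨hpi, ⟨h1, _⟩, h3⟩
            exact ⟨fun i => ⟨h1 i, h3 ▸ Finset.single_le_sum
              (fun j _ => Nat.zero_le _) (Finset.mem_univ i)⟩, h3⟩
          · rintro ⟨hIcc, h3⟩
            refine ⟨fun i => ?_, ⟨fun i => (hIcc i).1, by omega⟩, h3⟩
            have := (hIcc i).2
            omega
      _ = ∑ k ∈ Finset.range (d + 1), ∑ s ∈ Finset.range (d + 1),
            ∑ v ∈ (Fintype.piFinset fun _ : Fin s => Finset.Icc 1 k).filter
                (fun v => ∑ i, v i = k),
              (PowerSeries.coeff d)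
                (algebraMap ℚ (PowerSeries R) (1 / (Nat.factorial s : ℚ)) *
                  ∏ i, hterm (v i)) := Finset.sum_comm
      _ = ∑ k ∈ Finset.range (d + 1), (PowerSeries.coeff d) (E k) := by
          refine Finset.sum_congr rfl fun k hk => ?_
          have hkd : k ≤ d := by
            simp only [Finset.mem_range] at hk
            omega
          have hks : ∀ s ∈ Finset.range (d + 1), s ∉ Finset.range (k + 1) →
              (∑ v ∈ (Fintype.piFinset fun _ : Fin s => Finset.Icc 1 k).filter
                  (fun v => ∑ i, v i = k),
                (PowerSeries.coeff d)
                  (algebraMap ℚ (PowerSeries R) (1 / (Nat.factorial s : ℚ)) *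
                    ∏ i, hterm (v i))) = 0 := by
            intro s _ hs
            simp only [Finset.mem_range] at hs
            have hemp : (Fintype.piFinset fun _ : Fin s => Finset.Icc 1 k).filter
                (fun v => ∑ i, v i = k) = ∅ := by
              apply Finset.eq_empty_of_forall_notMem
              intro v hv
              simp only [Finset.mem_filter, Fintype.mem_piFinset, Finset.mem_Icc] at hv
              have hsk : s ≤ k := by
                calc s = ∑ _i : Fin s, 1 := by simp
                  _ ≤ ∑ i, v i := Finset.sum_le_sum fun i _ => (hv.1 i).1
                  _ = k := hv.2
              omega
            rw [hemp, Finset.sum_empty]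
          rw [← Finset.sum_subset (Finset.range_subset_range.2 (by omega)) hks]
          rw [hE]
          simp only []
          rw [map_sum]
          refine Finset.sum_congr rfl fun s _ => ?_
          rw [Finset.mul_sum, map_sum]
          refine Finset.sum_congr rfl fun v hv => ?_
          simp only [Finset.mem_filter, Fintype.mem_piFinset, Finset.mem_Icc] at hv
          congr 1
          congr 1
          refine Finset.prod_congr rfl fun i _ => ?_
          simp only [hhterm]
          rw [if_neg (by have := (hv.1 i).1; omega)]
  rw [hL, hR]
end
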